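/- Let p be an odd prime, k ∈ F_p with k ≠ 0, and let f be a monic irreducible polynomial of degree n ≥ 1 over F_p. Then 0 is not a root of f^{Q_k}, and the set of roots of f^{Q_k} (in an algebraic closure of F_p) is closed under inversion: if γ is a root of f^{Q_k}, then so is γ⁻¹. -/

import Mathlib

/-- The `Q_k`-transform of a polynomial `f` of degree `n` with coefficients
`f_0, …, f_n`: `f^{Q_k}(x) = k^{-n} · Σ_{j=0}^{n} f_j k^j (x²+1)^j x^{n-j}`,
which equals `(x/k)^n · f(k·(x + x⁻¹))` for all `x ≠ 0`. -/
noncomputable def Qtransform {F : Type*} [Field F] (k : F) (f : Polynomial F) :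
    Polynomial F :=
  Polynomial.C (k⁻¹ ^ f.natDegree) *
    ∑ j ∈ Finset.range (f.natDegree + 1),
      Polynomial.C (f.coeff j * k ^ j) * (Polynomial.X ^ 2 + 1) ^ j *
        Polynomial.X ^ (f.natDegree - j)

/-- Let `p` be an odd prime, `k ∈ F_p` nonzero, and `f` a monic irreducible
polynomial of degree `n ≥ 1` over `F_p`. Then `0` is not a root of `f^{Q_k}`,
and the set of roots of `f^{Q_k}` in an algebraic closure of `F_p` is closed
under inversion. -/
theorem Qtransform_zero_not_root_and_roots_inverse_closed (p : ℕ) [Fact p.Prime]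
    (hodd : Odd p) (k : ZMod p) (hk : k ≠ 0)
    (f : Polynomial (ZMod p)) (hmonic : f.Monic) (hirr : Irreducible f)
    (hn : 1 ≤ f.natDegree) :
    Polynomial.aeval (0 : AlgebraicClosure (ZMod p)) (Qtransform k f) ≠ 0 ∧
      ∀ γ : AlgebraicClosure (ZMod p),
        Polynomial.aeval γ (Qtransform k f) = 0 →
          Polynomial.aeval γ⁻¹ (Qtransform k f) = 0 := by
  set n := f.natDegree with hn'
  have hk' : (algebraMap (ZMod p) (AlgebraicClosure (ZMod p))) k ≠ 0 := by
    simpa using hk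
  have key : ∀ γ : AlgebraicClosure (ZMod p),
      Polynomial.aeval γ (Qtransform k f) =
        (algebraMap (ZMod p) (AlgebraicClosure (ZMod p)) k)⁻¹ ^ n *
          ∑ j ∈ Finset.range (n + 1),
            (algebraMap (ZMod p) (AlgebraicClosure (ZMod p)) (f.coeff j * k ^ j)) *
              (γ ^ 2 + 1) ^ j * γ ^ (n - j) := by
    intro γ
    simp [Qtransform, map_sum]
    rfl
  have h0 : Polynomial.aeval (0 : AlgebraicClosure (ZMod p)) (Qtransform k f) ≠ 0 := by
    rw [key]
    rw [Finset.sum_eq_single_of_mem n (Finset.self_mem_range_succ n)]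
    · have hcoeff : f.coeff n = 1 := hmonic
      simp [hcoeff, hk', inv_pow]
    · intro j hj hjn
      have h2 : n - j ≠ 0 :=
        (Nat.sub_pos_of_lt (lt_of_le_of_ne (Finset.mem_range_succ_iff.mp hj) hjn)).ne'
      simp [zero_pow h2]
  refine ⟨h0, ?_⟩
  intro γ hγ
  have hγ0 : γ ≠ 0 := by rintro rfl; exact h0 hγ
  rw [key] at hγ ⊢
  have hs : (∑ j ∈ Finset.range (n + 1),
      (algebraMap (ZMod p) (AlgebraicClosure (ZMod p)) (f.coeff j * k ^ j)) *
        (γ ^ 2 + 1) ^ j * γ ^ (n - j)) = 0 := by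
    rcases mul_eq_zero.mp hγ with h | h
    · exact absurd h (pow_ne_zero _ (inv_ne_zero hk'))
    · exact h
  have htrans : (∑ j ∈ Finset.range (n + 1),
      (algebraMap (ZMod p) (AlgebraicClosure (ZMod p)) (f.coeff j * k ^ j)) *
        (γ⁻¹ ^ 2 + 1) ^ j * γ⁻¹ ^ (n - j)) =
      (γ ^ (2 * n))⁻¹ * ∑ j ∈ Finset.range (n + 1),
      (algebraMap (ZMod p) (AlgebraicClosure (ZMod p)) (f.coeff j * k ^ j)) *
        (γ ^ 2 + 1) ^ j * γ ^ (n - j) := by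
    rw [Finset.mul_sum]
    refine Finset.sum_congr rfl fun j hj => ?_
    obtain ⟨m, hm⟩ := Nat.exists_eq_add_of_le (Finset.mem_range_succ_iff.mp hj)
    rw [hm, Nat.add_sub_cancel_left]
    field_simp
    have h1 : γ * γ⁻¹ = 1 := mul_inv_cancel₀ hγ0
    simp only [div_eq_mul_inv, one_mul, mul_pow]
    trans (algebraMap (ZMod p) (AlgebraicClosure (ZMod p))) (f.coeff j * k ^ j) * γ ^ m *
      (1 + γ ^ 2) ^ j * (γ * γ⁻¹) ^ (2 * j + m)
    · ring
    · rw [h1, one_pow, mul_one]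
      ring
  rw [htrans, hs, mul_zero, mul_zero]
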